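/- For all α, γ ∈ ℝ and every integer j ≥ 1, the j-th power of the quaternion Q¹ satisfies (Q¹)ʲ = ⟨ (−1)ʲ·T_{2j}(x), (−1)^{j−1}·c_α·s_γ·U_{2j−1}(x), (−1)ʲ·s_α·s_γ·U_{2j−1}(x), (−1)^{j−1}·c_α·c_γ·U_{2j−1}(x) ⟩, where Tₙ(x) and Uₙ(x) denote evaluations of the Chebyshev polynomials at x = c_γ·s_α. -/

import Mathlib

open Quaternion Polynomial Polynomial.Chebyshev Real

/-- Quaternion representation of the atomic rotation in atom `P₁` (with `β = α`). -/
noncomputable def Q1 (α γ : ℝ) : ℍ[ℝ] :=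
  ⟨cos (α/2)^2 - cos γ * sin (α/2)^2,
   cos (α/2) * sin (α/2) * sin γ,
   -(sin (α/2)^2) * sin γ,
   sin (α/2) * cos (α/2) * (1 + cos γ)⟩

/-- Quaternion representation of the atomic rotation in atom `P₄` (with `β = α`). -/
noncomputable def Q4 (α γ : ℝ) : ℍ[ℝ] :=
  ⟨1 - 2 * cos (α/2)^2 * cos (γ/2)^2,
   -2 * sin (α/2) * cos (α/2) * sin (γ/2) * cos (γ/2),
   -2 * cos (α/2)^2 * sin (γ/2) * cos (γ/2),
   -2 * sin (α/2) * cos (α/2) * cos (γ/2)^2⟩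

lemma chebU_step (n : ℤ) :
    U ℝ (n + 2) = 2 * X * T ℝ (n + 1) + (2 * X ^ 2 - 1) * U ℝ n := by
  have h1 := U_add_two ℝ n
  have h2 := U_eq_X_mul_U_add_T ℝ n
  linear_combination h1 + 2 * (X : ℝ[X]) * h2

lemma chebT_step (n : ℤ) :
    T ℝ (n + 3) = (2 * X ^ 2 - 1) * T ℝ (n + 1) - (1 - X ^ 2) * (2 * X) * U ℝ n := by
  have h1 := one_sub_X_sq_mul_U_eq_pol_in_T ℝ n
  have h2 := T_add_two ℝ (n + 1)
  have e1 : n + 1 + 2 = n + 3 := by ring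
  have e2 : n + 1 + 1 = n + 2 := by ring
  rw [e1, e2] at h2
  linear_combination h2 + 2 * (X : ℝ[X]) * h1

lemma Q1_eq (α γ : ℝ) :
    Q1 α γ = ⟨-(2 * (cos (γ/2) * sin (α/2))^2 - 1),
      cos (α/2) * sin (γ/2) * (2 * (cos (γ/2) * sin (α/2))),
      -(sin (α/2) * sin (γ/2)) * (2 * (cos (γ/2) * sin (α/2))),
      cos (α/2) * cos (γ/2) * (2 * (cos (γ/2) * sin (α/2)))⟩ := by
  have e : 2 * (γ/2) = γ := by ring
  have hc : cos γ = 2 * cos (γ/2)^2 - 1 := by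
    have := Real.cos_two_mul (γ/2); rw [e] at this; linarith
  have hs : sin γ = 2 * sin (γ/2) * cos (γ/2) := by
    have := Real.sin_two_mul (γ/2); rw [e] at this; linarith
  have ha : sin (α/2)^2 + cos (α/2)^2 = 1 := Real.sin_sq_add_cos_sq _
  unfold Q1
  refine QuaternionAlgebra.ext ?_ ?_ ?_ ?_
  · linear_combination ha - sin (α/2)^2 * hc
  · linear_combination cos (α/2) * sin (α/2) * hs
  · linear_combination -(sin (α/2)^2) * hs
  · linear_combination sin (α/2) * cos (α/2) * hc

/-- The `j`-th power of the quaternion `Q¹` in terms of Chebyshev polynomials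
evaluated at `x = cos(γ/2)·sin(α/2)`. -/
theorem Q1_pow (α γ : ℝ) (j : ℕ) (hj : 1 ≤ j) :
    Q1 α γ ^ j =
      ⟨(-1 : ℝ) ^ j * (T ℝ (2 * (j : ℤ))).eval (cos (γ/2) * sin (α/2)),
       (-1 : ℝ) ^ (j - 1) * cos (α/2) * sin (γ/2) *
         (U ℝ (2 * (j : ℤ) - 1)).eval (cos (γ/2) * sin (α/2)),
       (-1 : ℝ) ^ j * sin (α/2) * sin (γ/2) *
         (U ℝ (2 * (j : ℤ) - 1)).eval (cos (γ/2) * sin (α/2)),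
       (-1 : ℝ) ^ (j - 1) * cos (α/2) * cos (γ/2) *
         (U ℝ (2 * (j : ℤ) - 1)).eval (cos (γ/2) * sin (α/2))⟩ := by
  induction j, hj using Nat.le_induction with
  | base =>
      rw [pow_one, Q1_eq]
      have hT2 : (T ℝ (2 * ((1:ℕ) : ℤ))).eval (cos (γ/2) * sin (α/2))
          = 2 * (cos (γ/2) * sin (α/2)) ^ 2 - 1 := by
        norm_num [T_two]
      have hU1 : (U ℝ (2 * ((1:ℕ) : ℤ) - 1)).eval (cos (γ/2) * sin (α/2))
          = 2 * (cos (γ/2) * sin (α/2)) := by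
        norm_num [U_one]
      rw [hT2, hU1]
      refine QuaternionAlgebra.ext ?_ ?_ ?_ ?_ <;> ring
  | succ j hj ih =>
      have hpq : ((-1 : ℝ)) ^ j = -(-1 : ℝ) ^ (j - 1) := by
        conv_lhs => rw [← Nat.sub_add_cancel hj]
        rw [pow_succ]; ring
      have hS : ((-1 : ℝ)) ^ (j + 1) = -(-1 : ℝ) ^ j := by rw [pow_succ]; ring
      have hTv := congrArg (Polynomial.eval (cos (γ/2) * sin (α/2)))
        (chebT_step (2 * (j : ℤ) - 1))
      have hUv := congrArg (Polynomial.eval (cos (γ/2) * sin (α/2)))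
        (chebU_step (2 * (j : ℤ) - 1))
      simp only [eval_add, eval_sub, eval_mul, eval_pow, eval_ofNat, eval_one,
        eval_X] at hTv hUv
      have hidx3 : (2 * (j : ℤ) - 1 + 1) = 2 * (j : ℤ) := by ring
      rw [hidx3] at hTv hUv
      have hsg : sin (γ/2)^2 = 1 - cos (γ/2)^2 := by
        have := Real.sin_sq_add_cos_sq (γ/2); linarith
      have hca : cos (α/2)^2 = 1 - sin (α/2)^2 := by
        have := Real.sin_sq_add_cos_sq (α/2); linarith
      rw [pow_succ, ih, Q1_eq]
      have hidx1 : (2 * ((j:ℤ) + 1)) = 2 * (j : ℤ) - 1 + 3 := by ring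
      have hidx2 : (2 * (j:ℤ) - 1 + 3 - 1) = 2 * (j : ℤ) - 1 + 2 := by ring
      push_cast
      rw [hidx1, hidx2, hS, hpq]
      refine QuaternionAlgebra.ext ?_ ?_ ?_ ?_
      · erw [QuaternionAlgebra.re_mul]
        linear_combination -(-1:ℝ)^(j-1) * hTv -
          2 * (cos (γ/2) * sin (α/2)) * (-1:ℝ)^(j-1) *
            (U ℝ (2 * (j : ℤ) - 1)).eval (cos (γ/2) * sin (α/2)) *
            ((cos (α/2)^2 + sin (α/2)^2) * hsg + hca)
      · erw [QuaternionAlgebra.imI_mul]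
        linear_combination ((-1:ℝ)^(j-1)) * cos (α/2) * sin (γ/2) * hUv
      · erw [QuaternionAlgebra.imJ_mul]
        linear_combination (-(-1:ℝ)^(j-1)) * sin (α/2) * sin (γ/2) * hUv
      · erw [QuaternionAlgebra.imK_mul]
        linear_combination ((-1:ℝ)^(j-1)) * cos (α/2) * cos (γ/2) * hUv
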